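/- If a Banach space X is not reflexive, then there exist ε > 0 and a sequence (xᵢ) in the closed unit ball of X such that for every k, the distance between conv{x₁,…,x_k} and conv{x_{k+1}, x_{k+2}, …} is at least ε. -/

import Mathlib

set_option maxHeartbeats 1000000

open Metric NormedSpace

/-- Helly's theorem: if the values `c i` are compatible with the functionals `f i`
with constant `M`, then they are simultaneously attained by an element of norm `≤ M + ε`. -/
lemma helly_lemma {E : Type*} [NormedAddCommGroup E] [NormedSpace ℝ E] [CompleteSpace E]
    (n : ℕ) (f : Fin n → E →L[ℝ] ℝ) (c : Fin n → ℝ) (M ε : ℝ) (hM0 : 0 ≤ M) (hε : 0 < ε)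
    (hM : ∀ a : Fin n → ℝ, |∑ i, a i * c i| ≤ M * ‖∑ i, a i • f i‖) :
    ∃ x : E, ‖x‖ ≤ M + ε ∧ ∀ i, f i x = c i := by
  classical
  set V := EuclideanSpace ℝ (Fin n) with hV
  set T : E →L[ℝ] V :=
    ((EuclideanSpace.equiv (Fin n) ℝ).symm : (Fin n → ℝ) →L[ℝ] V).comp
      (ContinuousLinearMap.pi f) with hTdef
  have hTx : ∀ (x : E) (i : Fin n), T x i = f i x := fun _ _ => rfl
  set R : Submodule ℝ V := LinearMap.range (T : E →ₗ[ℝ] V) with hR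
  set cvec : V := (EuclideanSpace.equiv (Fin n) ℝ).symm c with hcvec
  have hcveci : ∀ i, cvec i = c i := fun _ => rfl
  -- every functional on V is given by coefficients
  have key : ∀ ψ : V →L[ℝ] ℝ, ∃ a : Fin n → ℝ, ∀ v : V, ψ v = ∑ i, a i * v i := by
    intro ψ
    refine ⟨fun i => ψ (EuclideanSpace.single i 1), fun v => ?_⟩
    conv_lhs => rw [← (EuclideanSpace.basisFun (Fin n) ℝ).sum_repr v]
    rw [map_sum]
    refine Finset.sum_congr rfl fun i _ => ?_
    rw [EuclideanSpace.basisFun_repr, EuclideanSpace.basisFun_apply, map_smul]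
    simp [mul_comm]
  -- cvec is in the range of T
  have hcR : cvec ∈ R := by
    by_contra hc
    set w : V := cvec - (R.orthogonalProjectionOnto cvec : V) with hw
    have hwmem : w ∈ Rᗮ := Submodule.sub_starProjection_mem_orthogonal (K := R) cvec
    have hwne : w ≠ 0 := by
      intro h
      apply hc
      have : cvec = (R.orthogonalProjectionOnto cvec : V) := by
        rwa [hw, sub_eq_zero] at h
      rw [this]; exact (R.orthogonalProjectionOnto cvec).2
    obtain ⟨a, ha⟩ := key (innerSL ℝ w)
    have h1 : (∑ i, a i • f i) = 0 := by
      ext x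
      have h2 : (∑ i, a i • f i) x = (innerSL ℝ w) (T x) := by
        rw [ha]
        simp [ContinuousLinearMap.sum_apply, hTx, mul_comm]
      rw [ContinuousLinearMap.zero_apply, h2]
      show (inner ℝ w (T x) : ℝ) = 0
      rw [real_inner_comm]
      exact hwmem (T x) (LinearMap.mem_range_self (T : E →ₗ[ℝ] V) x)
    have h3 := hM a
    rw [h1, norm_zero, mul_zero] at h3
    have h4 : ∑ i, a i * c i = (innerSL ℝ w) cvec := by
      rw [ha]
      exact Finset.sum_congr rfl fun i _ => rfl
    have h5 : (innerSL ℝ w) cvec = ‖w‖ ^ 2 := by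
      have : (innerSL ℝ w) cvec = (inner ℝ w cvec : ℝ) := rfl
      rw [this]
      have hsplit : cvec = w + (R.orthogonalProjectionOnto cvec : V) := by rw [hw]; abel
      rw [hsplit, inner_add_right]
      have : (inner ℝ w ((R.orthogonalProjectionOnto cvec : V)) : ℝ) = 0 := by
        have := hwmem (R.orthogonalProjectionOnto cvec : V) (R.orthogonalProjectionOnto cvec).2
        rwa [real_inner_comm] at this
      rw [this, add_zero, real_inner_self_eq_norm_sq]
    have h6 : 0 < ‖w‖ ^ 2 := by
      have := norm_pos_iff.mpr hwne
      positivity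
    rw [h4, h5] at h3
    have := abs_nonneg (‖w‖ ^ 2)
    nlinarith [le_abs_self (‖w‖ ^ 2)]
  -- now the open mapping / separation argument
  set T' : E →L[ℝ] R := T.codRestrict R (fun x => LinearMap.mem_range_self _ x) with hT'
  have hsurj : Function.Surjective T' := by
    rintro ⟨v, hv⟩
    obtain ⟨x, hx⟩ := hv
    exact ⟨x, Subtype.ext hx⟩
  set U : Set R := T' '' (ball 0 (M + ε)) with hU
  have hUopen : IsOpen U := (T'.isOpenMap hsurj) _ isOpen_ball
  have hUconv : Convex ℝ U := by
    have := (convex_ball (0 : E) (M + ε)).linear_image (T' : E →ₗ[ℝ] R)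
    simpa using this
  set c' : R := ⟨cvec, hcR⟩ with hc'
  have hmem : c' ∈ U := by
    by_contra hcU
    obtain ⟨φ, hφ⟩ := geometric_hahn_banach_open_point hUconv hUopen hcU
    set ψ : V →L[ℝ] ℝ := φ.comp (R.orthogonalProjectionOnto) with hψ
    have hψR : ∀ v : R, ψ (v : V) = φ v := by
      intro v
      simp [hψ, Submodule.orthogonalProjectionOnto_mem_subspace_eq_self]
    obtain ⟨a, ha⟩ := key ψ
    set g : E →L[ℝ] ℝ := ∑ i, a i • f i with hg
    have hgx : ∀ x : E, g x = φ (T' x) := by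
      intro x
      have h1 : φ (T' x) = ψ (T x) := (hψR (T' x)).symm
      rw [h1, ha]
      simp [hg, ContinuousLinearMap.sum_apply, hTx, mul_comm]
    set K : ℝ := φ c' with hK
    have hKval : K = ∑ i, a i * c i := by
      rw [hK, ← hψR c', ha]
      exact Finset.sum_congr rfl fun i _ => rfl
    have hMε : (0:ℝ) < M + ε := by linarith
    have hKpos : 0 < K := by
      have h0 : (0 : R) ∈ U := ⟨0, mem_ball_self hMε, map_zero T'⟩
      have h1 := hφ 0 h0
      rwa [map_zero] at h1
    -- |g y| ≤ K on the closed ball of radius M+ε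
    have habs : ∀ y : E, ‖y‖ ≤ M + ε → |g y| ≤ K := by
      have hball : ∀ y : E, ‖y‖ < M + ε → g y ≤ K := by
        intro y hy
        have : T' y ∈ U := ⟨y, mem_ball_zero_iff.2 hy, rfl⟩
        have := hφ _ this
        rw [← hgx] at this
        exact this.le
      have habs' : ∀ y : E, ‖y‖ < M + ε → |g y| ≤ K := by
        intro y hy
        rcases abs_cases (g y) with ⟨h, _⟩ | ⟨h, _⟩
        · rw [h]; exact hball y hy
        · rw [h]
          have : g (-y) ≤ K := hball (-y) (by simpa using hy)
          simpa using this
      intro y hy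
      have hmemcl : y ∈ closure (ball (0:E) (M + ε)) := by
        rw [closure_ball 0 (ne_of_gt hMε)]
        exact mem_closedBall_zero_iff.2 hy
      have hclosed : IsClosed {z : E | |g z| ≤ K} :=
        isClosed_le (continuous_abs.comp g.continuous) continuous_const
      have hsub : ball (0:E) (M + ε) ⊆ {z : E | |g z| ≤ K} := fun z hz =>
        habs' z (mem_ball_zero_iff.1 hz)
      exact closure_minimal hsub hclosed hmemcl
    -- hence (M+ε)‖g‖ ≤ K
    have hnorm : ‖g‖ ≤ K / (M + ε) := by
      apply ContinuousLinearMap.opNorm_le_bound _ (div_nonneg hKpos.le hMε.le)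
      intro x
      rcases eq_or_ne x 0 with rfl | hx
      · simp
      · have hxpos : 0 < ‖x‖ := norm_pos_iff.2 hx
        have hy := habs (((M + ε) / ‖x‖) • x) (by
          rw [norm_smul, Real.norm_eq_abs, abs_of_pos (by positivity)]
          rw [div_mul_cancel₀ _ (ne_of_gt hxpos)])
        rw [map_smul, smul_eq_mul, abs_mul, abs_of_pos (by positivity : (0:ℝ) < (M + ε) / ‖x‖)] at hy
        rw [Real.norm_eq_abs, div_mul_eq_mul_div, le_div_iff₀ hMε]
        calc |g x| * (M + ε) = (M + ε) / ‖x‖ * |g x| * ‖x‖ := by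
              field_simp
          _ ≤ K * ‖x‖ := by
              apply mul_le_mul_of_nonneg_right hy hxpos.le
    have hMK := hM a
    rw [← hKval, ← hg] at hMK
    have hKle : K ≤ M * ‖g‖ := le_trans (le_abs_self K) hMK
    have hgK : ‖g‖ * (M + ε) ≤ K := by
      rw [← le_div_iff₀ hMε] at *
      exact hnorm
    nlinarith [norm_nonneg g]
  obtain ⟨x, hxball, hxT⟩ := hmem
  refine ⟨x, (mem_ball_zero_iff.1 hxball).le, fun i => ?_⟩
  have : T x = cvec := congrArg Subtype.val hxT
  have := congrFun (congrArg (fun v : V => (v : Fin n → ℝ)) this) i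
  simpa [hTx, hcveci] using this

section Chain

variable {P : Type*}

/-- Build a sequence satisfying a "local" predicate step by step. -/
noncomputable def hellyChain (p₀ : P) (G : (ℕ → P) → ℕ → Prop)
    (hloc : ∀ s s' n, (∀ j ≤ n, s j = s' j) → G s n → G s' n)
    (hstep : ∀ s n, (∀ i < n, G s i) → ∃ p, G (Function.update s n p) n) :
    (n : ℕ) → {s : ℕ → P // ∀ i < n, G s i}
  | 0 => ⟨fun _ => p₀, fun i hi => absurd hi (Nat.not_lt_zero i)⟩
  | n + 1 =>
    (fun prev : {s : ℕ → P // ∀ i < n, G s i} =>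
      ⟨Function.update prev.1 n (Classical.choose (hstep prev.1 n prev.2)), by
        intro i hi
        rcases Nat.lt_succ_iff_lt_or_eq.mp hi with h | h
        · exact hloc _ _ i
            (fun j hj => (Function.update_of_ne (by omega) _ _).symm)
            (prev.2 i h)
        · subst h
          exact Classical.choose_spec (hstep prev.1 i prev.2)⟩)
    (hellyChain p₀ G hloc hstep n)

lemma hellyChain_stable (p₀ : P) (G : (ℕ → P) → ℕ → Prop)
    (hloc : ∀ s s' n, (∀ j ≤ n, s j = s' j) → G s n → G s' n)
    (hstep : ∀ s n, (∀ i < n, G s i) → ∃ p, G (Function.update s n p) n) :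
    ∀ n i, i < n → (hellyChain p₀ G hloc hstep n).1 i =
      (hellyChain p₀ G hloc hstep (i + 1)).1 i := by
  intro n
  induction n with
  | zero => omega
  | succ n ih =>
    intro i hi
    rcases Nat.lt_succ_iff_lt_or_eq.mp hi with h | h
    · have h1 : (hellyChain p₀ G hloc hstep (n + 1)).1 i =
          (hellyChain p₀ G hloc hstep n).1 i := by
        show Function.update (hellyChain p₀ G hloc hstep n).1 n
            (Classical.choose (hstep (hellyChain p₀ G hloc hstep n).1 n
              (hellyChain p₀ G hloc hstep n).2)) i =
          (hellyChain p₀ G hloc hstep n).1 i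
        exact Function.update_of_ne (by omega) _ _
      rw [h1]
      exact ih i h
    · subst h; rfl

lemma exists_forall_good (p₀ : P) (G : (ℕ → P) → ℕ → Prop)
    (hloc : ∀ s s' n, (∀ j ≤ n, s j = s' j) → G s n → G s' n)
    (hstep : ∀ s n, (∀ i < n, G s i) → ∃ p, G (Function.update s n p) n) :
    ∃ s : ℕ → P, ∀ n, G s n := by
  refine ⟨fun i => (hellyChain p₀ G hloc hstep (i + 1)).1 i, fun n => ?_⟩
  have h1 : G (hellyChain p₀ G hloc hstep (n + 1)).1 n :=
    (hellyChain p₀ G hloc hstep (n + 1)).2 n (Nat.lt_succ_self n)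
  exact hloc _ _ n
    (fun j hj => hellyChain_stable p₀ G hloc hstep (n + 1) j (Nat.lt_succ_of_le hj)) h1

end Chain

/-- The invariant for the James construction. -/
def GoodSeq {X : Type*} [NormedAddCommGroup X] [NormedSpace ℝ X]
    (F : StrongDual ℝ (StrongDual ℝ X)) (θ : ℝ) (s : ℕ → (StrongDual ℝ X) × X) (n : ℕ) : Prop :=
  ‖(s n).1‖ ≤ 1 ∧ ‖(s n).2‖ ≤ 1 ∧ F (s n).1 = θ ∧
    (∀ j < n, (s n).1 (s j).2 = 0) ∧ ∀ i ≤ n, (s i).1 (s n).2 = θ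

lemma goodSeq_loc {X : Type*} [NormedAddCommGroup X] [NormedSpace ℝ X]
    (F : StrongDual ℝ (StrongDual ℝ X)) (θ : ℝ) :
    ∀ s s' (n : ℕ), (∀ j ≤ n, s j = s' j) → GoodSeq F θ s n → GoodSeq F θ s' n := by
  intro s s' n h ⟨h1, h2, h3, h4, h5⟩
  have hn := (h n le_rfl).symm
  refine ⟨by rw [hn]; exact h1, by rw [hn]; exact h2, by rw [hn]; exact h3,
    fun j hj => ?_, fun i hi => ?_⟩
  · rw [hn, ← h j hj.le]; exact h4 j hj
  · rw [hn, ← h i hi]; exact h5 i hi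

/-- A Banach space is reflexive if the canonical inclusion into its double dual is onto. -/
def IsReflexiveSpace (X : Type*) [NormedAddCommGroup X] [NormedSpace ℝ X] : Prop :=
  Function.Surjective (NormedSpace.inclusionInDoubleDual ℝ X)

theorem nonreflexive_separated_convex_hulls
    (X : Type*) [NormedAddCommGroup X] [NormedSpace ℝ X] [CompleteSpace X]
    (hrefl : ¬ IsReflexiveSpace X) :
    ∃ ε : ℝ, 0 < ε ∧ ∃ x : ℕ → X, (∀ i, ‖x i‖ ≤ 1) ∧
      ∀ k : ℕ, ∀ u ∈ convexHull ℝ (x '' {i | i < k}),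
        ∀ v ∈ convexHull ℝ (x '' {i | k ≤ i}), ε ≤ ‖u - v‖ := by
  classical
  set J := NormedSpace.inclusionInDoubleDual ℝ X with hJ
  rw [IsReflexiveSpace, Function.Surjective] at hrefl
  push_neg at hrefl
  obtain ⟨F₀, hF₀⟩ := hrefl
  haveI : NormSMulClass ℝ (StrongDual ℝ (StrongDual ℝ X)) :=
    @NormedSpace.toNormSMulClass ℝ (StrongDual ℝ (StrongDual ℝ X)) _ _ _
  set S : Submodule ℝ (StrongDual ℝ (StrongDual ℝ X)) := LinearMap.range (J : X →ₗ[ℝ] StrongDual ℝ (StrongDual ℝ X)) with hS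
  have hF₀S : F₀ ∉ (S : Set (StrongDual ℝ (StrongDual ℝ X))) := by
    rintro ⟨x, hx⟩
    exact hF₀ x hx
  have hSclosed : IsClosed (S : Set (StrongDual ℝ (StrongDual ℝ X))) := by
    have hiso : Isometry (⇑J) := (NormedSpace.inclusionInDoubleDualLi ℝ (E := X)).isometry
    have heq : (S : Set (StrongDual ℝ (StrongDual ℝ X))) = Set.range (⇑J) := by
      ext y; simp [hS, LinearMap.mem_range, Set.mem_range]
    rw [heq]
    exact hiso.isClosedEmbedding.isClosed_range
  have hF₀ne : F₀ ≠ 0 := by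
    rintro rfl
    exact hF₀S (zero_mem S)
  have hn₀ : 0 < ‖F₀‖ := by
    rcases (norm_nonneg F₀).lt_or_eq with h1 | h1
    · exact h1
    · exact absurd ((@norm_eq_zero (StrongDual ℝ (StrongDual ℝ X)) _ F₀).1 h1.symm) hF₀ne
  set F := (2 * ‖F₀‖)⁻¹ • F₀ with hF
  have hFnorm : ‖F‖ = 1 / 2 := by
    rw [hF, norm_smul, norm_inv, Real.norm_eq_abs, abs_of_pos (by positivity)]
    field_simp
  have hFS : F ∉ (S : Set (StrongDual ℝ (StrongDual ℝ X))) := by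
    intro hmem
    apply hF₀S
    have h1 : (2 * ‖F₀‖) • F = F₀ := by
      rw [hF, smul_smul, mul_inv_cancel₀ (by positivity : (2 * ‖F₀‖) ≠ 0), one_smul]
    rw [← h1]
    exact S.smul_mem _ hmem
  set d := Metric.infDist F (S : Set (StrongDual ℝ (StrongDual ℝ X))) with hd
  have hSne : (S : Set (StrongDual ℝ (StrongDual ℝ X))).Nonempty := ⟨0, zero_mem S⟩
  have hdpos : 0 < d := (hSclosed.notMem_iff_infDist_pos hSne).1 hFS
  have hdist : ∀ y ∈ S, d ≤ ‖F - y‖ := fun y hy => by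
    rw [hd]
    exact (Metric.infDist_le_dist_of_mem hy).trans_eq (dist_eq_norm F y)
  set θ := d / 2 with hθ
  have hθpos : 0 < θ := by positivity
  clear_value F d θ
  -- the inductive step
  have hstep : ∀ (s : ℕ → (StrongDual ℝ X) × X) (n : ℕ), (∀ i < n, GoodSeq F θ s i) →
      ∃ p, GoodSeq F θ (Function.update s n p) n := by
    intro s n hs
    -- first choose the new functional
    have hf : ∃ fnew : StrongDual ℝ X, ‖fnew‖ ≤ 1 ∧ F fnew = θ ∧ ∀ j < n, fnew ((s j).2) = 0 := by
      set G : Fin (n + 1) → (StrongDual ℝ X) →L[ℝ] ℝ :=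
        Fin.cases F (fun j : Fin n => J ((s j).2)) with hG
      set cc : Fin (n + 1) → ℝ := Fin.cases θ (fun _ => 0) with hcc
      have hhM : ∀ a : Fin (n + 1) → ℝ,
          |∑ i, a i * cc i| ≤ (1 / 2) * ‖∑ i, a i • G i‖ := by
        intro a
        have hsum1 : ∑ i, a i * cc i = a 0 * θ := by
          rw [Fin.sum_univ_succ]
          simp [hcc]
        have hsum2 : ∑ i, a i • G i = a 0 • F + ∑ j : Fin n, a j.succ • J ((s j).2) := by
          rw [Fin.sum_univ_succ]
          simp [hG]
        rw [hsum1, hsum2]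
        set z := ∑ j : Fin n, a j.succ • J ((s j).2) with hz
        have hzS : z ∈ S :=
          Submodule.sum_mem S (fun j _ => S.smul_mem _ (LinearMap.mem_range_self (J : X →ₗ[ℝ] StrongDual ℝ (StrongDual ℝ X)) _))
        rcases eq_or_ne (a 0) 0 with h0 | h0
        · rw [h0]
          simp
          exact norm_nonneg (E := StrongDual ℝ (StrongDual ℝ X)) z
        · have hyS : (-(a 0)⁻¹) • z ∈ S := S.smul_mem _ hzS
          have hcalc : a 0 • F + z = a 0 • (F - (-(a 0)⁻¹) • z) := by
            rw [smul_sub, smul_smul]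
            have he : a 0 * -(a 0)⁻¹ = -1 := by field_simp
            rw [he]
            exact ((congrArg (fun t => a 0 • F - t) (neg_one_smul ℝ z)).trans (sub_neg_eq_add _ _)).symm
          rw [hcalc, norm_smul (a 0) (F - -(a 0)⁻¹ • z), Real.norm_eq_abs]
          have h1 : d ≤ ‖F - (-(a 0)⁻¹) • z‖ := hdist _ hyS
          rw [abs_mul, abs_of_pos hθpos, hθ]
          nlinarith [abs_nonneg (a 0)]
      obtain ⟨fnew, hf1, hf2⟩ :=
        helly_lemma (n + 1) G cc (1 / 2) (1 / 2) (by norm_num) (by norm_num) hhM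
      refine ⟨fnew, by linarith, ?_, ?_⟩
      · have h2 := hf2 0
        simpa [hG, hcc] using h2
      · intro j hj
        have h2 := hf2 (⟨j, hj⟩ : Fin n).succ
        simpa [hG, hcc, hJ, NormedSpace.dual_def] using h2
    obtain ⟨fnew, hfnorm, hfF, hfzero⟩ := hf
    -- now choose the new point
    set g : Fin (n + 1) → StrongDual ℝ X := fun i => if (i : ℕ) < n then (s i).1 else fnew with hg
    have hgF : ∀ i : Fin (n + 1), F (g i) = θ := by
      intro i
      by_cases h : (i : ℕ) < n
      · simp only [hg, if_pos h]
        exact (hs i h).2.2.1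
      · simp only [hg, if_neg h]
        exact hfF
    have hhM2 : ∀ a : Fin (n + 1) → ℝ, |∑ i, a i * θ| ≤ (1 / 2) * ‖∑ i, a i • g i‖ := by
      intro a
      have h1 : ∑ i, a i * θ = F (∑ i, a i • g i) := by
        rw [map_sum]
        exact Finset.sum_congr rfl fun i _ => by rw [map_smul, smul_eq_mul, hgF i]
      rw [h1]
      have h2 := F.le_opNorm (∑ i, a i • g i)
      rw [hFnorm] at h2
      calc |F (∑ i, a i • g i)| = ‖F (∑ i, a i • g i)‖ := (Real.norm_eq_abs _).symm
        _ ≤ (1 / 2) * ‖∑ i, a i • g i‖ := h2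
    obtain ⟨xnew, hx1, hx2⟩ :=
      helly_lemma (n + 1) g (fun _ => θ) (1 / 2) (1 / 2) (by norm_num) (by norm_num) hhM2
    refine ⟨(fnew, xnew), ?_, ?_, ?_, ?_, ?_⟩
    · rw [Function.update_self]
      exact hfnorm
    · rw [Function.update_self]
      linarith
    · rw [Function.update_self]
      exact hfF
    · intro j hj
      rw [Function.update_self, Function.update_of_ne (by omega)]
      exact hfzero j hj
    · intro i hi
      rw [Function.update_self]
      rcases Nat.lt_or_ge i n with h | h
      · rw [Function.update_of_ne (by omega)]
        have h3 := hx2 ⟨i, by omega⟩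
        simpa [hg, h] using h3
      · have hin : i = n := le_antisymm hi h
        subst hin
        rw [Function.update_self]
        have h3 := hx2 ⟨i, by omega⟩
        simpa [hg] using h3
  obtain ⟨s, hgood⟩ := exists_forall_good ((0 : StrongDual ℝ X), (0 : X)) (GoodSeq F θ)
    (goodSeq_loc F θ) hstep
  refine ⟨θ, hθpos, fun n => (s n).2, fun i => (hgood i).2.1, ?_⟩
  intro k u hu v hv
  set φk := (s k).1 with hφk
  have hφu : φk u = 0 := by
    have hconv : Convex ℝ {y : X | φk y = 0} := by
      have h1 := (convex_singleton (0 : ℝ)).linear_preimage (φk : X →ₗ[ℝ] ℝ)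
      have h2 : (⇑(φk : X →ₗ[ℝ] ℝ)) ⁻¹' {0} = {y : X | φk y = 0} := by
        ext y; simp
      rwa [h2] at h1
    have hsub : (fun n => (s n).2) '' {i | i < k} ⊆ {y : X | φk y = 0} := by
      rintro y ⟨i, hi, rfl⟩
      exact (hgood k).2.2.2.1 i hi
    exact convexHull_min hsub hconv hu
  have hφv : φk v = θ := by
    have hconv : Convex ℝ {y : X | φk y = θ} := by
      have h1 := (convex_singleton θ).linear_preimage (φk : X →ₗ[ℝ] ℝ)
      have h2 : (⇑(φk : X →ₗ[ℝ] ℝ)) ⁻¹' {θ} = {y : X | φk y = θ} := by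
        ext y; simp
      rwa [h2] at h1
    have hsub : (fun n => (s n).2) '' {i | k ≤ i} ⊆ {y : X | φk y = θ} := by
      rintro y ⟨i, hi, rfl⟩
      exact (hgood i).2.2.2.2 k hi
    exact convexHull_min hsub hconv hv
  have hφnorm : ‖φk‖ ≤ 1 := (hgood k).1
  calc θ = |φk (v - u)| := by
        rw [map_sub, hφu, hφv, sub_zero, abs_of_pos hθpos]
    _ = ‖φk (v - u)‖ := (Real.norm_eq_abs _).symm
    _ ≤ ‖φk‖ * ‖v - u‖ := φk.le_opNorm _
    _ ≤ 1 * ‖v - u‖ := mul_le_mul_of_nonneg_right hφnorm (norm_nonneg _)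
    _ = ‖u - v‖ := by rw [one_mul, norm_sub_rev]
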